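/- The limit as ε → -1⁺ of (1/Γ(1+ε)) ∫₀^∞ x^{ε-1} ln(xu+1) e^{-x} dx equals u, for every real u ≥ 0. -/

import Mathlib

open MeasureTheory Real Filter

lemma log_bound6 {t : ℝ} (ht : 0 ≤ t) : |Real.log (t + 1) - t| ≤ t ^ 2 := by
  have h1 : (0:ℝ) < t + 1 := by linarith
  have h2 : Real.log (t + 1) ≤ t := by
    have := Real.log_le_sub_one_of_pos h1; linarith
  have h3 : 1 - (t + 1)⁻¹ ≤ Real.log (t + 1) := by
    have := Real.log_le_sub_one_of_pos (show (0:ℝ) < (t+1)⁻¹ by positivity)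
    rw [Real.log_inv] at this; linarith
  have h4 : (t + 1)⁻¹ * (t + 1) = 1 := inv_mul_cancel₀ (ne_of_gt h1)
  rw [abs_le]
  constructor
  · nlinarith [sq_nonneg t, inv_nonneg.mpr (le_of_lt h1)]
  · nlinarith [sq_nonneg t]

theorem stmt6 (u : ℝ) (hu : 0 ≤ u) :
    Tendsto
      (fun ε : ℝ =>
        (1 / Real.Gamma (1 + ε)) *
          ∫ x in Set.Ioi (0:ℝ), x ^ (ε - 1) * Real.log (x * u + 1) * Real.exp (-x))
      (nhdsWithin (-1) (Set.Ioo (-1 : ℝ) 0)) (nhds u) := by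
  set F : ℝ → ℝ := fun ε =>
    (1 / Real.Gamma (1 + ε)) *
      ∫ x in Set.Ioi (0:ℝ), x ^ (ε - 1) * Real.log (x * u + 1) * Real.exp (-x) with hF
  have key : ∀ ε ∈ Set.Ioo (-1:ℝ) 0, |F ε - u| ≤ u ^ 2 * (1 + ε) := by
    rintro ε ⟨hε1, hε2⟩
    have hs : 0 < 1 + ε := by linarith
    have hs2 : 0 < 2 + ε := by linarith
    have hΓ : 0 < Real.Gamma (1 + ε) := Real.Gamma_pos_of_pos hs
    have hBint : IntegrableOn (fun x : ℝ => u * (Real.exp (-x) * x ^ ε)) (Set.Ioi (0:ℝ)) := by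
      have h := Real.GammaIntegral_convergent hs
      simp only [add_sub_cancel_left] at h
      exact h.const_mul u
    have hAmeas : AEStronglyMeasurable
        (fun x : ℝ => x ^ (ε - 1) * Real.log (x * u + 1) * Real.exp (-x))
        (volume.restrict (Set.Ioi (0:ℝ))) := by
      apply ContinuousOn.aestronglyMeasurable _ measurableSet_Ioi
      apply ContinuousOn.mul
      apply ContinuousOn.mul
      · exact fun x hx =>
          (Real.continuousAt_rpow_const x _ (Or.inl (ne_of_gt hx))).continuousWithinAt
      · apply ContinuousOn.log
        · fun_prop
        · intro x hx
          have : (0:ℝ) < x := hx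
          have : 0 ≤ x * u := by positivity
          positivity
      · fun_prop
    have hbound : ∀ x ∈ Set.Ioi (0:ℝ),
        ‖x ^ (ε - 1) * Real.log (x * u + 1) * Real.exp (-x)‖ ≤ u * (Real.exp (-x) * x ^ ε) := by
      intro x hx
      have hx0 : (0:ℝ) < x := hx
      have hxu : 0 ≤ x * u := by positivity
      have hlog0 : 0 ≤ Real.log (x * u + 1) := Real.log_nonneg (by linarith)
      have hlog1 : Real.log (x * u + 1) ≤ x * u := by
        have := Real.log_le_sub_one_of_pos (show (0:ℝ) < x * u + 1 by linarith); linarith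
      have hxε : x ^ (ε - 1) * x = x ^ ε := by
        rw [← Real.rpow_add_one (ne_of_gt hx0)]; norm_num
      rw [norm_mul, norm_mul, Real.norm_eq_abs, Real.norm_eq_abs, Real.norm_eq_abs,
        abs_of_nonneg (le_of_lt (Real.rpow_pos_of_pos hx0 _)),
        abs_of_nonneg hlog0, abs_of_nonneg (Real.exp_pos _).le]
      calc x ^ (ε - 1) * Real.log (x * u + 1) * Real.exp (-x)
          ≤ x ^ (ε - 1) * (x * u) * Real.exp (-x) := by
            apply mul_le_mul_of_nonneg_right _ (Real.exp_pos _).le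
            exact mul_le_mul_of_nonneg_left hlog1 (Real.rpow_pos_of_pos hx0 _).le
        _ = u * (Real.exp (-x) * (x ^ (ε - 1) * x)) := by ring
        _ = u * (Real.exp (-x) * x ^ ε) := by rw [hxε]
    have hAint : IntegrableOn
        (fun x : ℝ => x ^ (ε - 1) * Real.log (x * u + 1) * Real.exp (-x)) (Set.Ioi (0:ℝ)) := by
      apply hBint.mono' hAmeas
      rw [ae_restrict_iff' measurableSet_Ioi]
      filter_upwards with x hx using hbound x hx
    have hBval : ∫ x in Set.Ioi (0:ℝ), u * (Real.exp (-x) * x ^ ε) = u * Real.Gamma (1 + ε) := by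
      rw [integral_const_mul, Real.Gamma_eq_integral hs]
      simp [add_sub_cancel_left]
    have hdiff : F ε - u = (1 / Real.Gamma (1 + ε)) *
        ∫ x in Set.Ioi (0:ℝ),
          (x ^ (ε - 1) * Real.log (x * u + 1) * Real.exp (-x) - u * (Real.exp (-x) * x ^ ε)) := by
      rw [integral_sub hAint hBint, hBval, hF]
      field_simp
      congr 1; congr 1; funext x; ring
    have hGint : IntegrableOn (fun x : ℝ => u ^ 2 * (Real.exp (-x) * x ^ (1 + ε)))
        (Set.Ioi (0:ℝ)) := by
      have h := Real.GammaIntegral_convergent hs2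
      have h2 : (2:ℝ) + ε - 1 = 1 + ε := by ring
      rw [h2] at h
      exact h.const_mul _
    have hGval : ∫ x in Set.Ioi (0:ℝ), u ^ 2 * (Real.exp (-x) * x ^ (1 + ε))
        = u ^ 2 * ((1 + ε) * Real.Gamma (1 + ε)) := by
      rw [integral_const_mul]
      have h2 : (2:ℝ) + ε - 1 = 1 + ε := by ring
      have hg := Real.Gamma_eq_integral hs2
      rw [h2] at hg
      rw [← hg]
      have hg1 := Real.Gamma_add_one (ne_of_gt hs)
      rw [show (1:ℝ) + ε + 1 = 2 + ε by ring] at hg1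
      rw [hg1]
    have hnorm : ‖∫ x in Set.Ioi (0:ℝ),
        (x ^ (ε - 1) * Real.log (x * u + 1) * Real.exp (-x) - u * (Real.exp (-x) * x ^ ε))‖
        ≤ ∫ x in Set.Ioi (0:ℝ), u ^ 2 * (Real.exp (-x) * x ^ (1 + ε)) := by
      apply norm_integral_le_of_norm_le hGint
      rw [ae_restrict_iff' measurableSet_Ioi]
      filter_upwards with x hx
      have hx0 : (0:ℝ) < x := hx
      have hxu : 0 ≤ x * u := by positivity
      have hxε : x ^ (ε - 1) * x = x ^ ε := by
        rw [← Real.rpow_add_one (ne_of_gt hx0)]; norm_num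
      have hxε2 : x ^ (ε - 1) * x ^ (2:ℕ) = x ^ (1 + ε) := by
        rw [← Real.rpow_natCast x 2, ← Real.rpow_add hx0]
        norm_num; ring_nf
      have heq : x ^ (ε - 1) * Real.log (x * u + 1) * Real.exp (-x) - u * (Real.exp (-x) * x ^ ε)
          = x ^ (ε - 1) * Real.exp (-x) * (Real.log (x * u + 1) - x * u) := by
        rw [← hxε]; ring
      rw [heq, Real.norm_eq_abs, abs_mul,
        abs_of_nonneg (mul_nonneg (Real.rpow_pos_of_pos hx0 _).le (Real.exp_pos _).le)]
      have hlb := log_bound6 hxu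
      calc x ^ (ε - 1) * Real.exp (-x) * |Real.log (x * u + 1) - x * u|
          ≤ x ^ (ε - 1) * Real.exp (-x) * (x * u) ^ 2 := by
            apply mul_le_mul_of_nonneg_left hlb
            positivity
        _ = u ^ 2 * (Real.exp (-x) * (x ^ (ε - 1) * x ^ (2:ℕ))) := by ring
        _ = u ^ 2 * (Real.exp (-x) * x ^ (1 + ε)) := by rw [hxε2]
    calc |F ε - u| ≤ (1 / Real.Gamma (1 + ε)) * (u ^ 2 * ((1 + ε) * Real.Gamma (1 + ε))) := by
          rw [hdiff, abs_mul, abs_of_nonneg (by positivity : (0:ℝ) ≤ 1 / Real.Gamma (1 + ε))]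
          apply mul_le_mul_of_nonneg_left _ (by positivity)
          rw [← Real.norm_eq_abs, ← hGval]
          exact hnorm
      _ = u ^ 2 * (1 + ε) := by field_simp
  -- squeeze
  have h0 : Tendsto (fun ε : ℝ => u ^ 2 * (1 + ε))
      (nhdsWithin (-1) (Set.Ioo (-1:ℝ) 0)) (nhds 0) := by
    have : Tendsto (fun ε : ℝ => u ^ 2 * (1 + ε)) (nhds (-1)) (nhds (u ^ 2 * (1 + -1))) := by
      apply Tendsto.const_mul
      exact (continuous_const.add continuous_id).tendsto _
    simp only [add_neg_cancel, mul_zero] at this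
    exact this.mono_left nhdsWithin_le_nhds
  have hsub : Tendsto (fun ε : ℝ => F ε - u) (nhdsWithin (-1) (Set.Ioo (-1:ℝ) 0)) (nhds 0) := by
    apply squeeze_zero_norm' _ h0
    filter_upwards [self_mem_nhdsWithin] with ε hε
    simpa [Real.norm_eq_abs] using key ε hε
  have := hsub.add_const u
  simpa using this
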